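/- Let p_1 ≥ p_2 ≥ ... ≥ p_n > 0 be a TS instance. The makespan of the schedule produced by Greedy, namely the sum of the elements of the Greedy gap multiset G_n, is at most (3/2) · OPT(p). In other words, the approximation ratio of Greedy is at most 1.5. -/
import Mathlib


/-- A schedule `s` is feasible for the TS instance given by sizes `p 1 ≥ … ≥ p n > 0`:
start times are nonnegative and any two distinct jobs are separated by at least
the smaller of the two sizes. -/
def Feasible (n : ℕ) (p s : ℕ → ℝ) : Prop :=
  (∀ j, 1 ≤ j → j ≤ n → 0 ≤ s j) ∧
  ∀ i j, 1 ≤ i → i ≤ n → 1 ≤ j → j ≤ n → i ≠ j → min (p i) (p j) ≤ |s i - s j|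

/-- The makespan of a schedule: `max_j (s j + p j)` over jobs `1 ≤ j ≤ n`. -/
noncomputable def makespan (n : ℕ) (p s : ℕ → ℝ) : ℝ :=
  sSup ((fun j => s j + p j) '' Set.Icc 1 n)

/-- `OPT`: the infimum of the makespan over all feasible schedules. -/
noncomputable def OPT (n : ℕ) (p : ℕ → ℝ) : ℝ :=
  sInf {T | ∃ s : ℕ → ℝ, Feasible n p s ∧ makespan n p s = T}

/-- The multiset of gaps maintained by Greedy: `G 1 = {p 1}`, and `G (j+1)` is obtained
from `G j` by removing a maximum element `x` and inserting `p (j+1)` and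
`max (p (j+1)) (x - p (j+1))`. (For positive instances `fold max 0` is the maximum.) -/
noncomputable def greedyGaps (p : ℕ → ℝ) : ℕ → Multiset ℝ
  | 0 => 0
  | 1 => {p 1}
  | (j + 2) =>
      let G := greedyGaps p (j + 1)
      let x := G.fold max 0
      p (j + 2) ::ₘ max (p (j + 2)) (x - p (j + 2)) ::ₘ G.erase x


section AuxDefs

noncomputable def Dlb (p : ℕ → ℝ) (m : ℕ) : ℝ :=
  (if m % 2 = 1 then p ((m+1)/2) else 0) + 2 * ∑ k ∈ Finset.Icc ((m+1)/2 + 1) m, p k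

noncomputable def Dcoef (m k : ℕ) : ℝ :=
  if 2*k ≤ m then 0 else if 2*k = m+1 then 1 else 2

noncomputable def chainSum (p : ℕ → ℝ) : List ℕ → ℝ
  | [] => 0
  | [a] => p a
  | a :: b :: t => min (p a) (p b) + chainSum p (b :: t)

def charges : List ℕ → Multiset ℕ
  | [] => 0
  | [a] => {a}
  | a :: b :: t => (max a b) ::ₘ charges (b :: t)

noncomputable def dstep (p : ℕ → ℝ) (m t : ℕ) : ℝ := if t = m then p m else p t - p (t+1)

lemma greedyGaps_succ (p : ℕ → ℝ) (j : ℕ) :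
    greedyGaps p (j+2) = p (j+2) ::ₘ max (p (j+2)) ((greedyGaps p (j+1)).fold max 0 - p (j+2)) ::ₘ
      (greedyGaps p (j+1)).erase ((greedyGaps p (j+1)).fold max 0) := rfl

end AuxDefs
lemma fold_max_mem (s : Multiset ℝ) (h : s ≠ 0) (h0 : ∀ g ∈ s, (0:ℝ) ≤ g) : s.fold max 0 ∈ s := by
  induction s using Multiset.induction_on with
  | empty => simp at h
  | cons a t ih =>
    rw [Multiset.fold_cons_left]
    rcases eq_or_ne t 0 with rfl | ht
    · simp [max_eq_left (h0 a (by simp))]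
    · rcases le_total (t.fold max 0) a with hc | hc
      · simp [max_eq_left hc]
      · rw [max_eq_right hc]
        exact Multiset.mem_cons_of_mem (ih ht fun g hg => h0 g (Multiset.mem_cons_of_mem hg))

lemma le_fold_max (s : Multiset ℝ) (g : ℝ) (hg : g ∈ s) : g ≤ s.fold max 0 := by
  induction s using Multiset.induction_on with
  | empty => simp at hg
  | cons a t ih =>
    rw [Multiset.fold_cons_left]
    rcases Multiset.mem_cons.1 hg with rfl | h
    · exact le_max_left _ _
    · exact le_trans (ih h) (le_max_right _ _)

lemma paid_bound (p : ℕ → ℝ) (m : ℕ) (hm : 2 ≤ m) (x : ℝ)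
    (hq : ∀ k ∈ Finset.Icc 1 m, p m ≤ p k)
    (hqpos : 0 < p m) (hqx : p m ≤ x) (hx : x < 2 * p m) :
    (∑ k ∈ Finset.Icc 1 (m-1), min (p k) x) + 2 * p m - x ≤ 3/2 * Dlb p m := by
  set H := (m+1)/2 with hH
  have hH1 : 1 ≤ H := by omega
  have hHm : H ≤ m - 1 := by omega
  have hsplit : (∑ k ∈ Finset.Icc 1 H, min (p k) x) + ∑ k ∈ Finset.Icc (H+1) (m-1), min (p k) x
      = ∑ k ∈ Finset.Icc 1 (m-1), min (p k) x := by
    rw [show Finset.Icc 1 H = Finset.Ioc 0 H from Finset.Icc_add_one_left_eq_Ioc 0 H,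
      show Finset.Icc (H+1) (m-1) = Finset.Ioc H (m-1) from Finset.Icc_add_one_left_eq_Ioc H (m-1),
      show Finset.Icc 1 (m-1) = Finset.Ioc 0 (m-1) from Finset.Icc_add_one_left_eq_Ioc 0 (m-1)]
    exact Finset.sum_Ioc_consecutive _ (by omega) (by omega)
  have hS1 : (∑ k ∈ Finset.Icc 1 H, min (p k) x) ≤ (H : ℝ) * x := by
    calc (∑ k ∈ Finset.Icc 1 H, min (p k) x) ≤ ∑ _k ∈ Finset.Icc 1 H, x :=
          Finset.sum_le_sum (fun k _ => min_le_right _ _)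
      _ = (H : ℝ) * x := by rw [Finset.sum_const, Nat.card_Icc]; push_cast; ring
  have hS2 : (∑ k ∈ Finset.Icc (H+1) (m-1), min (p k) x) ≤ ∑ k ∈ Finset.Icc (H+1) (m-1), p k :=
    Finset.sum_le_sum (fun k _ => min_le_left _ _)
  set T : ℝ := ∑ k ∈ Finset.Icc (H+1) m, p k with hT
  have hTsplit : T = (∑ k ∈ Finset.Icc (H+1) (m-1), p k) + p m := by
    have hm1 : (m-1)+1 = m := by omega
    have h2 := Finset.sum_Icc_succ_top (a := H+1) (b := m-1) (by omega) p
    rw [hm1] at h2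
    rw [hT, h2]
  have hTge : ((m - H : ℕ) : ℝ) * p m ≤ T := by
    have := Finset.card_nsmul_le_sum (Finset.Icc (H+1) m) p (p m)
      (fun k hk => by
        have hk' := Finset.mem_Icc.1 hk
        exact hq k (Finset.mem_Icc.2 ⟨by omega, hk'.2⟩))
    rwa [Nat.card_Icc, nsmul_eq_mul, show m + 1 - (H+1) = m - H by omega] at this
  have hmain : (∑ k ∈ Finset.Icc 1 (m-1), min (p k) x) + 2 * p m - x
      ≤ (H:ℝ) * x + (T - p m) + 2 * p m - x := by
    rw [← hsplit]; linarith [hS1, hS2, hTsplit]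
  rcases Nat.even_or_odd m with he | ho
  · -- even : m = 2H
    have hm2 : m % 2 = 0 := Nat.even_iff.mp he
    have h2H : 2 * H = m := by omega
    have hmod : ¬ (m % 2 = 1) := by omega

    have hcast : ((m - H : ℕ) : ℝ) = (H : ℝ) := by
      have : m - H = H := by omega
      rw [this]
    rw [Dlb, if_neg hmod]
    have hHr : (1:ℝ) ≤ (H:ℝ) := by exact_mod_cast hH1
    rw [hcast] at hTge
    nlinarith [hmain, hTge, hx, hqx, hqpos]
  · -- odd : m = 2H - 1
    have hm2 : m % 2 = 1 := Nat.odd_iff.mp ho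
    have h2H : 2 * H = m + 1 := by omega
    have hmod : m % 2 = 1 := by omega
    have hcast : ((m - H : ℕ) : ℝ) = (H : ℝ) - 1 := by
      have : m - H = H - 1 := by omega
      rw [this]; push_cast [hH1]; ring
    rw [Dlb, if_pos hmod, ← hH]
    have hph : p m ≤ p H := hq H (Finset.mem_Icc.2 ⟨by omega, by omega⟩)
    have hHr : (1:ℝ) ≤ (H:ℝ) := by exact_mod_cast hH1
    rw [hcast] at hTge
    nlinarith [hmain, hTge, hx, hqx, hqpos, hph]

section Inv
variable (n : ℕ) (p : ℕ → ℝ)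
    (hsort : ∀ i j, 1 ≤ i → i ≤ j → j ≤ n → p j ≤ p i)
    (hpos : ∀ i, 1 ≤ i → i ≤ n → 0 < p i)

set_option linter.unusedSectionVars false

include hsort hpos in
lemma gaps_ge : ∀ j, 1 ≤ j → j ≤ n → ∀ g ∈ greedyGaps p j, p j ≤ g := by
  intro j hj
  induction j, hj using Nat.le_induction with
  | base => intro _ g hg; simp only [greedyGaps] at hg; simp at hg; simp [hg]
  | succ j hj ih =>
    intro hjn g hg
    obtain ⟨k, rfl⟩ : ∃ k, j = k + 1 := ⟨j - 1, by omega⟩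
    rw [greedyGaps_succ] at hg
    have hple : p (k+2) ≤ p (k+1) := hsort (k+1) (k+2) (by omega) (by omega) hjn
    rcases Multiset.mem_cons.1 hg with rfl | hg
    · exact le_refl _
    rcases Multiset.mem_cons.1 hg with rfl | hg
    · exact le_max_left _ _
    · exact le_trans hple (ih (by omega) g (Multiset.mem_of_mem_erase hg))

include hsort hpos in
lemma gaps_pos : ∀ j, 1 ≤ j → j ≤ n → ∀ g ∈ greedyGaps p j, 0 < g := fun j h1 h2 g hg =>
  lt_of_lt_of_le (hpos j h1 h2) (gaps_ge n p hsort hpos j h1 h2 g hg)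

include hsort hpos in
lemma gaps_ne : ∀ j, 1 ≤ j → j ≤ n → greedyGaps p j ≠ 0 := by
  intro j hj
  induction j, hj using Nat.le_induction with
  | base => intro _ h; simp only [greedyGaps] at h; simp at h
  | succ j hj ih =>
    intro hjn h
    obtain ⟨k, rfl⟩ : ∃ k, j = k + 1 := ⟨j - 1, by omega⟩
    rw [greedyGaps_succ] at h
    exact Multiset.cons_ne_zero h

include hsort hpos in
/-- the maximum gap is a member -/
lemma fold_mem (j : ℕ) (h1 : 1 ≤ j) (h2 : j ≤ n) :
    (greedyGaps p j).fold max 0 ∈ greedyGaps p j :=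
  fold_max_mem _ (gaps_ne n p hsort hpos j h1 h2)
    (fun g hg => le_of_lt (gaps_pos n p hsort hpos j h1 h2 g hg))

include hsort hpos in
/-- sum of min-truncated gaps is at most the corresponding sum for job sizes -/
lemma gaps_minsum : ∀ j, 1 ≤ j → j ≤ n → ∀ t : ℝ,
    ((greedyGaps p j).map (fun g => min g t)).sum ≤ ∑ k ∈ Finset.Icc 1 j, min (p k) t := by
  intro j hj
  induction j, hj using Nat.le_induction with
  | base =>
    intro _ t
    simp only [greedyGaps]
    simp
  | succ j hj ih =>
    intro hjn t
    obtain ⟨k, rfl⟩ : ∃ k, j = k + 1 := ⟨j - 1, by omega⟩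
    set G := greedyGaps p (k+1) with hG
    set x := G.fold max 0 with hx
    have hmem : x ∈ G := fold_mem n p hsort hpos (k+1) (by omega) (by omega)
    have hpx : p (k+2) ≤ x := by
      refine le_trans (hsort (k+1) (k+2) (by omega) (by omega) hjn) ?_
      exact le_trans (gaps_ge n p hsort hpos (k+1) (by omega) (by omega) x hmem) (le_refl _)
    have hcons : G = x ::ₘ G.erase x := (Multiset.cons_erase hmem).symm
    have hesum : ((G.erase x).map (fun g => min g t)).sum
        = (G.map (fun g => min g t)).sum - min x t := by
      conv_rhs => rw [hcons]
      rw [Multiset.map_cons, Multiset.sum_cons]; ring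
    rw [greedyGaps_succ, ← hG, ← hx, Multiset.map_cons, Multiset.map_cons,
      Multiset.sum_cons, Multiset.sum_cons, hesum]
    have hg2 : max (p (k+2)) (x - p (k+2)) ≤ x := by
      apply max_le hpx
      have : 0 < p (k+2) := hpos (k+2) (by omega) hjn
      linarith
    have hmin2 : min (max (p (k+2)) (x - p (k+2))) t ≤ min x t :=
      min_le_min hg2 (le_refl t)
    have hIH := ih (by omega) t
    rw [Finset.sum_Icc_succ_top (by omega : 1 ≤ k+2)]
    linarith
end Inv

section Main
variable (n : ℕ) (p : ℕ → ℝ)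
    (hsort : ∀ i j, 1 ≤ i → i ≤ j → j ≤ n → p j ≤ p i)
    (hpos : ∀ i, 1 ≤ i → i ≤ n → 0 < p i)

include hsort hpos in
lemma greedy_le (L : ℝ) (hL : ∀ m, 1 ≤ m → m ≤ n → Dlb p m ≤ L) :
    ∀ j, 1 ≤ j → j ≤ n → (greedyGaps p j).sum ≤ 3/2 * L := by
  intro j hj
  induction j, hj using Nat.le_induction with
  | base =>
    intro h1n
    have h1 : Dlb p 1 ≤ L := hL 1 le_rfl h1n
    have : Dlb p 1 = p 1 := by simp [Dlb]
    have hp1 : 0 < p 1 := hpos 1 le_rfl h1n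
    simp only [greedyGaps, Multiset.sum_singleton]
    linarith
  | succ j hj ih =>
    intro hjn
    obtain ⟨k, rfl⟩ : ∃ k, j = k + 1 := ⟨j - 1, by omega⟩
    set G := greedyGaps p (k+1) with hG
    set x := G.fold max 0 with hx
    have hmem : x ∈ G := fold_mem n p hsort hpos (k+1) (by omega) (by omega)
    have hpk2 : 0 < p (k+2) := hpos (k+2) (by omega) hjn
    have hpx : p (k+2) ≤ x :=
      le_trans (hsort (k+1) (k+2) (by omega) (by omega) hjn)
        (gaps_ge n p hsort hpos (k+1) (by omega) (by omega) x hmem)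
    have hsum : (greedyGaps p (k+2)).sum
        = p (k+2) + max (p (k+2)) (x - p (k+2)) + (G.sum - x) := by
      rw [greedyGaps_succ, ← hG, ← hx, Multiset.sum_cons, Multiset.sum_cons]
      have : G = x ::ₘ G.erase x := (Multiset.cons_erase hmem).symm
      conv_rhs => rw [this]
      rw [Multiset.sum_cons]; ring
    rcases lt_or_ge x (2 * p (k+2)) with hc | hc
    · -- paid step
      have hmax : max (p (k+2)) (x - p (k+2)) = p (k+2) := max_eq_left (by linarith)
      have hGsum : G.sum ≤ ∑ i ∈ Finset.Icc 1 (k+1), min (p i) x := by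
        have heq : G.map (fun g => min g x) = G.map id := by
          apply Multiset.map_congr rfl
          intro g hg
          exact min_eq_left (le_fold_max G g hg)
        have := gaps_minsum n p hsort hpos (k+1) (by omega) (by omega) x
        rwa [heq, Multiset.map_id] at this
      have hpb := paid_bound p (k+2) (by omega) x
        (fun i hi => by
          have hi' := Finset.mem_Icc.1 hi
          exact hsort i (k+2) hi'.1 hi'.2 hjn)
        hpk2 hpx hc
      have hD : Dlb p (k+2) ≤ L := hL (k+2) (by omega) hjn
      rw [hsum, hmax]
      have h21 : (k+2) - 1 = k+1 := rfl
      rw [h21] at hpb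
      linarith
    · -- free step
      have hmax : max (p (k+2)) (x - p (k+2)) = x - p (k+2) := max_eq_right (by linarith)
      rw [hsum, hmax]
      have := ih (by omega)
      linarith
end Main

lemma charges_mem : ∀ l : List ℕ, ∀ w ∈ charges l, w ∈ l := by
  intro l
  induction l with
  | nil => intro w hw; simp [charges] at hw
  | cons a t ih =>
    intro w hw
    cases t with
    | nil => simp [charges] at hw; simp [hw]
    | cons b t' =>
      rcases Multiset.mem_cons.1 hw with rfl | hw'
      · rcases max_choice a b with h | h <;> rw [h] <;> simp
      · exact List.mem_cons_of_mem a (ih w hw')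

lemma charges_card : ∀ l : List ℕ, Multiset.card (charges l) = l.length := by
  intro l
  induction l with
  | nil => rfl
  | cons a t ih =>
    cases t with
    | nil => rfl
    | cons b t' => simp [charges] at ih ⊢; omega

lemma charges_count_head : ∀ (a : ℕ) (t : List ℕ), a ∉ t → (charges (a :: t)).count a ≤ 1 := by
  intro a t ha
  cases t with
  | nil => simp [charges]
  | cons b t' =>
    have h2 : (charges (b :: t')).count a = 0 := by
      rw [Multiset.count_eq_zero]
      intro hmem
      exact ha (charges_mem _ a hmem)
    show ((max a b) ::ₘ charges (b :: t')).count a ≤ 1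
    rcases eq_or_ne (max a b) a with h | h
    · rw [h, Multiset.count_cons_self, h2]
    · rw [Multiset.count_cons_of_ne (Ne.symm h), h2]; omega

lemma charges_count : ∀ l : List ℕ, l.Nodup → ∀ w, (charges l).count w ≤ 2 := by
  intro l
  induction l with
  | nil => intro _ w; simp [charges]
  | cons a t ih =>
    intro hnd w
    have hat : a ∉ t := (List.nodup_cons.1 hnd).1
    have hndt : t.Nodup := (List.nodup_cons.1 hnd).2
    cases t with
    | nil =>
      rw [show charges [a] = {a} from rfl, Multiset.count_singleton]
      split_ifs <;> omega
    | cons b t' =>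
      rw [show charges (a :: b :: t') = (max a b) ::ₘ charges (b :: t') from rfl,
        Multiset.count_cons]
      rcases eq_or_ne w a with rfl | hwa
      · have h0 : (charges (b :: t')).count w = 0 :=
          Multiset.count_eq_zero.2 (fun hm => hat (charges_mem _ _ hm))
        rw [h0]; split_ifs <;> omega
      · rcases eq_or_ne w b with rfl | hwb
        · have h1 : (charges (w :: t')).count w ≤ 1 :=
            charges_count_head w t' (List.nodup_cons.1 hndt).1
          split_ifs <;> omega
        · have hne : max a b ≠ w := by
            rcases max_choice a b with h | h <;> rw [h] <;> [exact Ne.symm hwa; exact Ne.symm hwb]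
          rw [if_neg (Ne.symm hne)]
          have := ih hndt w
          omega


lemma icc_split (a m : ℕ) (h1 : a ≤ m) (f : ℕ → ℝ) :
    (∑ k ∈ Finset.Icc 1 a, f k) + ∑ k ∈ Finset.Icc (a+1) m, f k = ∑ k ∈ Finset.Icc 1 m, f k := by
  rw [show Finset.Icc 1 a = Finset.Ioc 0 a from Finset.Icc_add_one_left_eq_Ioc 0 a,
    show Finset.Icc (a+1) m = Finset.Ioc a m from Finset.Icc_add_one_left_eq_Ioc a m,
    show Finset.Icc 1 m = Finset.Ioc 0 m from Finset.Icc_add_one_left_eq_Ioc 0 m]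
  exact Finset.sum_Ioc_consecutive _ (by omega) h1

lemma Dlb_eq (p : ℕ → ℝ) (m : ℕ) (hm : 1 ≤ m) :
    Dlb p m = ∑ k ∈ Finset.Icc 1 m, Dcoef m k * p k := by
  set H := (m+1)/2 with hH
  have hH1 : 1 ≤ H := by omega
  have hHm : H ≤ m := by omega
  rw [← icc_split H m hHm]
  have h2 : ∑ k ∈ Finset.Icc (H+1) m, Dcoef m k * p k = 2 * ∑ k ∈ Finset.Icc (H+1) m, p k := by
    rw [Finset.mul_sum]
    apply Finset.sum_congr rfl
    intro k hk
    have hk' := Finset.mem_Icc.1 hk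
    rw [Dcoef, if_neg (by omega), if_neg (by omega)]
  have h1 : ∑ k ∈ Finset.Icc 1 H, Dcoef m k * p k = if m % 2 = 1 then p H else 0 := by
    rcases Nat.even_or_odd m with he | ho
    · have hm2 : m % 2 = 0 := Nat.even_iff.mp he
      rw [if_neg (by omega)]
      apply Finset.sum_eq_zero
      intro k hk
      have hk' := Finset.mem_Icc.1 hk
      rw [Dcoef, if_pos (by omega), zero_mul]
    · have hm2 : m % 2 = 1 := Nat.odd_iff.mp ho
      rw [if_pos hm2]
      rw [Finset.sum_eq_single_of_mem H (Finset.mem_Icc.2 ⟨hH1, le_refl H⟩)]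
      · rw [Dcoef, if_neg (by omega), if_pos (by omega), one_mul]
      · intro k hk hkH
        have hk' := Finset.mem_Icc.1 hk
        rw [Dcoef, if_pos (by omega), zero_mul]
  rw [h1, h2, Dlb]

lemma Dcoef_prefix (m : ℕ) : ∀ t, t ≤ m →
    ∑ k ∈ Finset.Icc 1 t, Dcoef m k = max 0 ((2*t : ℝ) - m) := by
  intro t
  induction t with
  | zero =>
    intro _
    simp only [Finset.Icc_self, show Finset.Icc 1 0 = ∅ by rfl, Finset.sum_empty]
    rw [max_eq_left]
    have : (0:ℝ) ≤ m := Nat.cast_nonneg m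
    push_cast
    linarith
  | succ t ih =>
    intro htm
    rw [Finset.sum_Icc_succ_top (by omega : 1 ≤ t+1), ih (by omega), Dcoef,
      show ((t+1:ℕ):ℝ) = (t:ℝ)+1 by push_cast; ring]
    rcases le_or_gt (2*(t+1)) m with hc1 | hc1
    · rw [if_pos hc1]
      have hR : 2*((t:ℝ)+1) ≤ m := by exact_mod_cast hc1
      rw [max_eq_left (by linarith), max_eq_left (by linarith)]
      ring
    · rcases eq_or_ne (2*(t+1)) (m+1) with hc2 | hc2
      · rw [if_neg (by omega), if_pos hc2]
        have hR : 2*((t:ℝ)+1) = (m:ℝ)+1 := by exact_mod_cast hc2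
        rw [max_eq_left (by linarith), max_eq_right (by linarith)]
        linarith
      · rw [if_neg (by omega), if_neg hc2]
        have hge : m ≤ 2*t := by omega
        have hR : (m:ℝ) ≤ 2*(t:ℝ) := by exact_mod_cast hge
        rw [max_eq_right (by linarith), max_eq_right (by linarith)]
        ring


lemma tele (p : ℕ → ℝ) (m : ℕ) :
    ∀ d k, 1 ≤ k → k + d = m → p k = ∑ t ∈ Finset.Icc k m, dstep p m t := by
  intro d
  induction d with
  | zero =>
    intro k hk1 hkm
    rw [show k = m by omega]
    simp [dstep]
  | succ d ih =>
    intro k hk1 hkm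
    have hkm' : k < m := by omega
    have hins : Finset.Icc k m = insert k (Finset.Icc (k+1) m) := by
      ext i; simp only [Finset.mem_Icc, Finset.mem_insert]; omega
    rw [hins, Finset.sum_insert (by simp only [Finset.mem_Icc]; omega)]
    have := ih (k+1) (by omega) (by omega)
    rw [dstep, if_neg (by omega)]
    linarith

lemma swap_sum (m : ℕ) (f : ℕ → ℕ → ℝ) :
    ∑ k ∈ Finset.Icc 1 m, ∑ t ∈ Finset.Icc k m, f k t
      = ∑ t ∈ Finset.Icc 1 m, ∑ k ∈ Finset.Icc 1 t, f k t := by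
  have h1 : ∀ k ∈ Finset.Icc 1 m, (∑ t ∈ Finset.Icc k m, f k t)
      = ∑ t ∈ Finset.Icc 1 m, if k ≤ t then f k t else 0 := by
    intro k hk
    have hk' := Finset.mem_Icc.1 hk
    have he : Finset.Icc k m = (Finset.Icc 1 m).filter (fun t => k ≤ t) := by
      ext t; simp only [Finset.mem_Icc, Finset.mem_filter]; omega
    rw [he, Finset.sum_filter]
  have h2 : ∀ t ∈ Finset.Icc 1 m, (∑ k ∈ Finset.Icc 1 t, f k t)
      = ∑ k ∈ Finset.Icc 1 m, if k ≤ t then f k t else 0 := by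
    intro t ht
    have ht' := Finset.mem_Icc.1 ht
    have he : Finset.Icc 1 t = (Finset.Icc 1 m).filter (fun k => k ≤ t) := by
      ext k; simp only [Finset.mem_Icc, Finset.mem_filter]; omega
    rw [he, Finset.sum_filter]
  rw [Finset.sum_congr rfl h1, Finset.sum_congr rfl h2, Finset.sum_comm]

lemma abel_cmp (m : ℕ) (hm : 1 ≤ m) (p : ℕ → ℝ)
    (hd : ∀ k, 1 ≤ k → k < m → p (k+1) ≤ p k) (hpm : 0 ≤ p m)
    (γ : ℕ → ℝ)
    (hpre : ∀ t, 1 ≤ t → t ≤ m → max 0 ((2*t : ℝ) - m) ≤ ∑ k ∈ Finset.Icc 1 t, γ k) :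
    ∑ k ∈ Finset.Icc 1 m, Dcoef m k * p k ≤ ∑ k ∈ Finset.Icc 1 m, γ k * p k := by
  have hdstep : ∀ t ∈ Finset.Icc 1 m, 0 ≤ dstep p m t := by
    intro t ht
    have ht' := Finset.mem_Icc.1 ht
    rw [dstep]
    split_ifs with h
    · exact hpm
    · have := hd t ht'.1 (by omega)
      linarith
  have key : ∀ γ' : ℕ → ℝ, ∑ k ∈ Finset.Icc 1 m, γ' k * p k
      = ∑ t ∈ Finset.Icc 1 m, dstep p m t * ∑ k ∈ Finset.Icc 1 t, γ' k := by
    intro γ'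
    have : ∀ k ∈ Finset.Icc 1 m, γ' k * p k = ∑ t ∈ Finset.Icc k m, γ' k * dstep p m t := by
      intro k hk
      have hk' := Finset.mem_Icc.1 hk
      rw [← Finset.mul_sum, ← tele p m (m - k) k hk'.1 (by omega)]
    rw [Finset.sum_congr rfl this, swap_sum]
    apply Finset.sum_congr rfl
    intro t _
    rw [Finset.mul_sum]
    exact Finset.sum_congr rfl (fun k _ => by ring)
  rw [key, key]
  apply Finset.sum_le_sum
  intro t ht
  have ht' := Finset.mem_Icc.1 ht
  apply mul_le_mul_of_nonneg_left _ (hdstep t ht)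
  rw [Dcoef_prefix m t ht'.2]
  exact hpre t ht'.1 ht'.2

lemma charges_sum_le (p : ℕ → ℝ) (n : ℕ)
    (hsort : ∀ i j, 1 ≤ i → i ≤ j → j ≤ n → p j ≤ p i) :
    ∀ l : List ℕ, (∀ a ∈ l, 1 ≤ a ∧ a ≤ n) → ((charges l).map p).sum ≤ chainSum p l := by
  intro l
  induction l with
  | nil => intro _; simp [charges, chainSum]
  | cons a t ih =>
    intro hmem
    cases t with
    | nil => simp [charges, chainSum]
    | cons b t' =>
      have hmax : p (max a b) ≤ min (p a) (p b) := by
        have ha := hmem a (by simp)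
        have hb := hmem b (by simp)
        apply le_min
        · exact hsort a (max a b) ha.1 (le_max_left a b) (by
            rcases max_choice a b with h | h <;> rw [h] <;> [exact ha.2; exact hb.2])
        · exact hsort b (max a b) hb.1 (le_max_right a b) (by
            rcases max_choice a b with h | h <;> rw [h] <;> [exact ha.2; exact hb.2])
      have := ih (fun x hx => hmem x (List.mem_cons_of_mem a hx))
      show ((max a b ::ₘ charges (b :: t')).map p).sum ≤ min (p a) (p b) + chainSum p (b :: t')
      rw [Multiset.map_cons, Multiset.sum_cons]
      linarith

lemma makespan_ge (n : ℕ) (p s : ℕ → ℝ) (i : ℕ) (h1 : 1 ≤ i) (h2 : i ≤ n) :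
    s i + p i ≤ makespan n p s := by
  apply le_csSup
  · exact ((Set.finite_Icc 1 n).image _).bddAbove
  · exact ⟨i, ⟨h1, h2⟩, rfl⟩

lemma chain_exists (n : ℕ) (p s : ℕ → ℝ) (hf : Feasible n p s) :
    ∀ N (J : Finset ℕ), J.card ≤ N → J.Nonempty → (∀ i ∈ J, 1 ≤ i ∧ i ≤ n) →
    ∃ l : List ℕ, l.Nodup ∧ l.toFinset = J ∧ l ≠ [] ∧
      s (l.head!) + chainSum p l ≤ makespan n p s ∧ l.head! ∈ J := by
  intro N
  induction N with
  | zero => intro J hcard hne _; exact absurd (Finset.card_pos.2 hne) (by omega)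
  | succ N ih =>
    intro J hcard hne hmemJ
    obtain ⟨i0, hi0J, hmin⟩ := J.exists_min_image s hne
    rcases (J.erase i0).eq_empty_or_nonempty with he | hne'
    · -- J = {i0}
      have hJ : J = {i0} := by
        apply Finset.eq_singleton_iff_unique_mem.2
        exact ⟨hi0J, fun x hx => by
          by_contra hxx
          exact (Finset.notMem_empty x) (he ▸ Finset.mem_erase.2 ⟨hxx, hx⟩)⟩
      refine ⟨[i0], by simp, by simp [hJ], by simp, ?_, by simp [hi0J]⟩
      have := hmemJ i0 hi0J
      simpa [chainSum] using makespan_ge n p s i0 this.1 this.2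
    · obtain ⟨l', hnd', htf', hne'', hbound, hhead⟩ := ih (J.erase i0)
        (by rw [Finset.card_erase_of_mem hi0J]; omega) hne'
        (fun i hi => hmemJ i (Finset.mem_of_mem_erase hi))
      obtain ⟨b, t, rfl⟩ : ∃ b t, l' = b :: t := by
        cases l' with
        | nil => exact absurd rfl hne''
        | cons b t => exact ⟨b, t, rfl⟩
      have hbJ' : b ∈ J.erase i0 := hhead
      have hbJ : b ∈ J := Finset.mem_of_mem_erase hbJ'
      have hbne : b ≠ i0 := (Finset.mem_erase.1 hbJ').1
      have hi0n := hmemJ i0 hi0J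
      have hbn := hmemJ b hbJ
      have hsep : min (p i0) (p b) ≤ |s i0 - s b| :=
        hf.2 i0 b hi0n.1 hi0n.2 hbn.1 hbn.2 (Ne.symm hbne)
      have hle : s i0 ≤ s b := hmin b hbJ
      have habs : |s i0 - s b| = s b - s i0 := by
        rw [abs_sub_comm]; exact abs_of_nonneg (by linarith)
      refine ⟨i0 :: b :: t, ?_, ?_, by simp, ?_, by simpa using hi0J⟩
      · refine List.nodup_cons.2 ⟨?_, hnd'⟩
        intro hmem
        have : i0 ∈ J.erase i0 := htf' ▸ List.mem_toFinset.2 hmem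
        exact (Finset.mem_erase.1 this).1 rfl
      · rw [List.toFinset_cons, htf', Finset.insert_erase hi0J]
      · have hcs : chainSum p (i0 :: b :: t) = min (p i0) (p b) + chainSum p (b :: t) := rfl
        have hh : (i0 :: b :: t).head! = i0 := rfl
        have hh' : (b :: t).head! = b := rfl
        rw [hh, hcs]
        rw [hh'] at hbound
        rw [habs] at hsep
        linarith

section OptSide
variable (n : ℕ) (p : ℕ → ℝ)
    (hsort : ∀ i j, 1 ≤ i → i ≤ j → j ≤ n → p j ≤ p i)
    (hpos : ∀ i, 1 ≤ i → i ≤ n → 0 < p i)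

set_option linter.unusedSectionVars false

include hsort hpos in
lemma Dlb_le_makespan (s : ℕ → ℝ) (hf : Feasible n p s) (m : ℕ)
    (hm1 : 1 ≤ m) (hmn : m ≤ n) : Dlb p m ≤ makespan n p s := by
  obtain ⟨l, hnd, htf, hlne, hbound, hheadJ⟩ := chain_exists n p s hf
    (Finset.Icc 1 m).card (Finset.Icc 1 m) le_rfl
    ⟨1, Finset.mem_Icc.2 ⟨le_rfl, hm1⟩⟩
    (fun i hi => by
      have := Finset.mem_Icc.1 hi
      exact ⟨this.1, le_trans this.2 hmn⟩)
  have hmem : ∀ a ∈ l, a ∈ Finset.Icc 1 m := fun a ha => htf ▸ List.mem_toFinset.2 ha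
  have hheadn := Finset.mem_Icc.1 hheadJ
  have hs0 : 0 ≤ s l.head! := hf.1 _ hheadn.1 (le_trans hheadn.2 hmn)
  have hcs : chainSum p l ≤ makespan n p s := by linarith
  have h1 : ((charges l).map p).sum ≤ chainSum p l :=
    charges_sum_le p n hsort l (fun a ha => by
      have := Finset.mem_Icc.1 (hmem a ha)
      exact ⟨this.1, le_trans this.2 hmn⟩)
  set C := charges l with hC
  have hCsub : C.toFinset ⊆ Finset.Icc 1 m :=
    fun w hw => hmem w (charges_mem l w (Multiset.mem_toFinset.1 hw))
  have hmap : (C.map p).sum = ∑ k ∈ Finset.Icc 1 m, (C.count k : ℝ) * p k := by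
    rw [Finset.sum_multiset_map_count]
    rw [Finset.sum_subset hCsub (fun x _ hx => by
      rw [Multiset.count_eq_zero.2 (fun hm => hx (Multiset.mem_toFinset.2 hm)), zero_smul])]
    exact Finset.sum_congr rfl (fun k _ => by rw [nsmul_eq_mul])
  have hlen : l.length = m := by
    have h1 := List.toFinset_card_of_nodup hnd
    rw [htf, Nat.card_Icc] at h1
    omega
  have htot : ∑ k ∈ Finset.Icc 1 m, ((C.count k : ℕ) : ℝ) = (m : ℝ) := by
    have h2 : ∑ k ∈ Finset.Icc 1 m, C.count k = Multiset.card C := by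
      rw [← Multiset.toFinset_sum_count_eq C]
      exact (Finset.sum_subset hCsub (fun x _ hx => by
        rw [Multiset.count_eq_zero.2 (fun hm => hx (Multiset.mem_toFinset.2 hm))])).symm
    rw [← Nat.cast_sum, h2, charges_card, hlen]
  have hpre : ∀ t, 1 ≤ t → t ≤ m →
      max 0 ((2*t : ℝ) - m) ≤ ∑ k ∈ Finset.Icc 1 t, ((C.count k : ℕ) : ℝ) := by
    intro t ht1 htm
    apply max_le
    · exact Finset.sum_nonneg (fun k _ => Nat.cast_nonneg _)
    · have hsplit := icc_split t m htm (fun k => ((C.count k : ℕ) : ℝ))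
      have hub : ∑ k ∈ Finset.Icc (t+1) m, ((C.count k : ℕ) : ℝ) ≤ 2 * ((m - t : ℕ) : ℝ) := by
        calc ∑ k ∈ Finset.Icc (t+1) m, ((C.count k : ℕ) : ℝ)
            ≤ ∑ _k ∈ Finset.Icc (t+1) m, (2:ℝ) := Finset.sum_le_sum (fun k _ => by
              exact_mod_cast charges_count l hnd k)
          _ = 2 * ((m - t : ℕ) : ℝ) := by
              rw [Finset.sum_const, Nat.card_Icc, nsmul_eq_mul,
                show m + 1 - (t+1) = m - t by omega]
              ring
      have hcast : ((m - t : ℕ) : ℝ) = (m : ℝ) - t := by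
        push_cast [htm]; ring
      rw [hcast] at hub
      linarith
  have habel := abel_cmp m hm1 p
    (fun k hk1 hkm => hsort k (k+1) hk1 (by omega) (by omega))
    (le_of_lt (hpos m hm1 hmn))
    (fun k => ((C.count k : ℕ) : ℝ)) hpre
  calc Dlb p m = ∑ k ∈ Finset.Icc 1 m, Dcoef m k * p k := Dlb_eq p m hm1
    _ ≤ ∑ k ∈ Finset.Icc 1 m, ((C.count k : ℕ) : ℝ) * p k := habel
    _ = (C.map p).sum := hmap.symm
    _ ≤ chainSum p l := h1
    _ ≤ makespan n p s := hcs

include hsort hpos in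
lemma opt_nonempty (hn : 1 ≤ n) :
    {T | ∃ s : ℕ → ℝ, Feasible n p s ∧ makespan n p s = T}.Nonempty := by
  refine ⟨makespan n p (fun j => (j : ℝ) * p 1), fun j => (j:ℝ) * p 1, ⟨?_, ?_⟩, rfl⟩
  · intro j _ _
    exact mul_nonneg (Nat.cast_nonneg j) (le_of_lt (hpos 1 le_rfl hn))
  · intro i j hi1 hin hj1 hjn hij
    have hp1 : 0 < p 1 := hpos 1 le_rfl hn
    have habs : |(i:ℝ) - (j:ℝ)| ≥ 1 := by
      have : (i:ℤ) ≠ (j:ℤ) := by exact_mod_cast hij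
      have h1 : 1 ≤ |(i:ℤ) - (j:ℤ)| := Int.one_le_abs (sub_ne_zero.2 this)
      have h2 : ((|(i:ℤ) - (j:ℤ)| : ℤ) : ℝ) = |(i:ℝ) - (j:ℝ)| := by
        push_cast [Int.cast_abs]
        ring_nf
      rw [← h2]
      exact_mod_cast h1
    have : |(i:ℝ) * p 1 - (j:ℝ) * p 1| = |(i:ℝ) - (j:ℝ)| * p 1 := by
      rw [← sub_mul, abs_mul, abs_of_pos hp1]
    rw [this]
    calc min (p i) (p j) ≤ p i := min_le_left _ _
      _ ≤ p 1 := hsort 1 i le_rfl hi1 hin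
      _ ≤ |(i:ℝ) - (j:ℝ)| * p 1 := by nlinarith
  
include hsort hpos in
lemma Dlb_le_OPT (hn : 1 ≤ n) (m : ℕ) (hm1 : 1 ≤ m) (hmn : m ≤ n) :
    Dlb p m ≤ OPT n p := by
  apply le_csInf (opt_nonempty n p hsort hpos hn)
  rintro T ⟨s, hfs, rfl⟩
  exact Dlb_le_makespan n p hsort hpos s hfs m hm1 hmn

end OptSide


/-- the makespan of the schedule produced by Greedy (the sum of the
elements of the final gap multiset) is at most `(3/2) · OPT p`. -/
theorem stmt5 (n : ℕ) (hn : 1 ≤ n) (p : ℕ → ℝ)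
    (hsort : ∀ i j, 1 ≤ i → i ≤ j → j ≤ n → p j ≤ p i)
    (hpos : ∀ i, 1 ≤ i → i ≤ n → 0 < p i) :
    (greedyGaps p n).sum ≤ 3 / 2 * OPT n p :=
  greedy_le n p hsort hpos (OPT n p)
    (fun m h1 h2 => Dlb_le_OPT n p hsort hpos hn m h1 h2) n hn le_rfl
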